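/- Fix R > 0, c > 0, γ ∈ ℝ, and α0, β0 > 0, and consider the private-sampling game defined in the context. The profile with q0 = 1, q1 = 0, and σ_D(p) = 1 if p < 1/2 and σ_D(p) = 0 if p > 1/2 (with σ_D(1/2) arbitrary) is never a pure-strategy equilibrium: for every choice of the parameters at least one of the two attacker best-response conditions fails. -/

import Mathlib

open intervalIntegral

/-- The Beta function `B(a,b) = ∫_0^1 t^(a−1)(1−t)^(b−1) dt`. -/
noncomputable def betaFn (a b : ℝ) : ℝ :=
  ∫ t in (0:ℝ)..1, t ^ (a - 1) * (1 - t) ^ (b - 1)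

/-- The regularized incomplete Beta function
`I_x(a,b) = (∫_0^x t^(a−1)(1−t)^(b−1) dt) / B(a,b)`. -/
noncomputable def regIncBeta (x a b : ℝ) : ℝ :=
  (∫ t in (0:ℝ)..x, t ^ (a - 1) * (1 - t) ^ (b - 1)) / betaFn a b

/-- The attacker's posterior mean `m(θ) = (α0+θ)/(α0+β0+1)`. -/
noncomputable def postMean (α0 β0 θ : ℝ) : ℝ := (α0 + θ) / (α0 + β0 + 1)

/-- The attacker's conditional expectation of the defender's strategy,
`E_D(θ) = (∫_0^1 σ_D(p)·p^(α0+θ−1)(1−p)^(β0−θ) dp) / B(α0+θ, β0+1−θ)`. -/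
noncomputable def expDef (α0 β0 θ : ℝ) (σD : ℝ → ℝ) : ℝ :=
  (∫ p in (0:ℝ)..1, σD p * (p ^ (α0 + θ - 1) * (1 - p) ^ (β0 - θ)))
    / betaFn (α0 + θ) (β0 + 1 - θ)

/-- The attacker's (reduced) objective given sample `θ`:
`σ ↦ σ·((m(θ) − γ)R + c·(1 − 2E_D(θ)))`. -/
noncomputable def attackerObj (R c γ α0 β0 θ : ℝ) (σD : ℝ → ℝ) (σ : ℝ) : ℝ :=
  σ * ((postMean α0 β0 θ - γ) * R + c * (1 - 2 * expDef α0 β0 θ σD))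

/-- `(q0, q1, σ_D)` is a pure-strategy equilibrium of the private-sampling game:
all strategies are probabilities, `q_θ` maximizes the attacker's objective for each
sample `θ ∈ {0,1}`, and for every `p ∈ [0,1]` with `p ≠ 1/2`, `σ_D(p)` minimizes
the defender's objective `σ ↦ σ·(1 − 2((1−p)q0 + p·q1))`. -/
def IsPureEq (R c γ α0 β0 : ℝ) (q0 q1 : ℝ) (σD : ℝ → ℝ) : Prop :=
  q0 ∈ Set.Icc (0:ℝ) 1 ∧ q1 ∈ Set.Icc (0:ℝ) 1
    ∧ (∀ p ∈ Set.Icc (0:ℝ) 1, σD p ∈ Set.Icc (0:ℝ) 1)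
    ∧ (∀ σ ∈ Set.Icc (0:ℝ) 1,
        attackerObj R c γ α0 β0 0 σD σ ≤ attackerObj R c γ α0 β0 0 σD q0)
    ∧ (∀ σ ∈ Set.Icc (0:ℝ) 1,
        attackerObj R c γ α0 β0 1 σD σ ≤ attackerObj R c γ α0 β0 1 σD q1)
    ∧ (∀ p ∈ Set.Icc (0:ℝ) 1, p ≠ 1/2 → ∀ σ ∈ Set.Icc (0:ℝ) 1,
        σD p * (1 - 2 * ((1 - p) * q0 + p * q1))
          ≤ σ * (1 - 2 * ((1 - p) * q0 + p * q1)))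

open MeasureTheory Set


lemma aux_integrable {u v : ℝ} (hu : -1 < u) (hv : -1 < v) :
    IntervalIntegrable (fun t : ℝ => t ^ u * (1 - t) ^ v) volume 0 1 := by
  have h1 : IntervalIntegrable (fun t : ℝ => t ^ u * (1 - t) ^ v) volume 0 (1/2) := by
    apply IntervalIntegrable.mul_continuousOn (intervalIntegrable_rpow' hu)
    apply ContinuousOn.rpow_const (by fun_prop)
    intro x hx
    rw [Set.uIcc_of_le (by norm_num : (0:ℝ) ≤ 1/2)] at hx
    exact Or.inl (by intro h; nlinarith [hx.2, sub_eq_zero.mp h])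
  have hbase : IntervalIntegrable (fun t : ℝ => (1 - t) ^ v) volume (1/2) 1 := by
    have h := IntervalIntegrable.comp_sub_left
      (intervalIntegrable_rpow' (r := v) hv (a := 1/2) (b := 0)) 1
    norm_num at h
    exact h
  have h2 : IntervalIntegrable (fun t : ℝ => t ^ u * (1 - t) ^ v) volume (1/2) 1 := by
    apply IntervalIntegrable.continuousOn_mul hbase
    apply ContinuousOn.rpow_const (by fun_prop)
    intro x hx
    rw [Set.uIcc_of_le (by norm_num : (1/2:ℝ) ≤ 1)] at hx
    exact Or.inl (by intro h; rw [h] at hx; norm_num at hx)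
  exact h1.trans h2

lemma betaFn_pos {a b : ℝ} (ha : 0 < a) (hb : 0 < b) : 0 < betaFn a b := by
  apply intervalIntegral_pos_of_pos_on
    (aux_integrable (by linarith) (by linarith)) _ one_pos
  intro x hx
  exact mul_pos (Real.rpow_pos_of_pos hx.1 _)
    (Real.rpow_pos_of_pos (by linarith [hx.2]) _)

lemma ae_ne_half : ∀ᵐ x : ℝ ∂volume, x ≠ (1/2 : ℝ) := by
  refine ae_iff.mpr ?_
  simpa using Real.volume_singleton (a := (1/2 : ℝ))

lemma half_integral {u v : ℝ} (hu : -1 < u) (hv : -1 < v) (σD : ℝ → ℝ)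
    (hlt : ∀ p : ℝ, p < 1/2 → σD p = 1) (hgt : ∀ p : ℝ, 1/2 < p → σD p = 0)
    (hInt : IntervalIntegrable (fun t : ℝ => t ^ u * (1 - t) ^ v) volume 0 1) :
    ∫ p in (0:ℝ)..1, σD p * (p ^ u * (1 - p) ^ v)
      = ∫ p in (0:ℝ)..(1/2), p ^ u * (1 - p) ^ v := by
  have hI1 : IntervalIntegrable (fun p : ℝ => σD p * (p ^ u * (1 - p) ^ v))
      volume 0 (1/2) := by
    apply IntervalIntegrable.congr_ae
      (hInt.mono_set (by rw [Set.uIcc_of_le (by norm_num : (0:ℝ) ≤ 1/2),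
        Set.uIcc_of_le (by norm_num : (0:ℝ) ≤ 1)]; exact Set.Icc_subset_Icc le_rfl (by norm_num)))
    filter_upwards [ae_restrict_mem measurableSet_uIoc, ae_restrict_of_ae ae_ne_half]
      with x hx hne
    rw [Set.uIoc_of_le (by norm_num : (0:ℝ) ≤ 1/2)] at hx
    have : x < 1/2 := lt_of_le_of_ne hx.2 hne
    rw [hlt x this, one_mul]
  have hI2 : IntervalIntegrable (fun p : ℝ => σD p * (p ^ u * (1 - p) ^ v))
      volume (1/2) 1 := by
    apply IntervalIntegrable.congr_ae (_root_.intervalIntegrable_const (c := (0:ℝ)))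
    filter_upwards [ae_restrict_mem measurableSet_uIoc] with x hx
    rw [Set.uIoc_of_le (by norm_num : (1/2:ℝ) ≤ 1)] at hx
    rw [hgt x hx.1, zero_mul]
  have hsplit := integral_add_adjacent_intervals hI1 hI2
  have h2 : ∫ p in (1/2:ℝ)..1, σD p * (p ^ u * (1 - p) ^ v) = 0 := by
    apply integral_zero_ae
    filter_upwards with x hx
    rw [Set.uIoc_of_le (by norm_num : (1/2:ℝ) ≤ 1)] at hx
    rw [hgt x hx.1, zero_mul]
  have h1 : ∫ p in (0:ℝ)..(1/2), σD p * (p ^ u * (1 - p) ^ v)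
      = ∫ p in (0:ℝ)..(1/2), p ^ u * (1 - p) ^ v := by
    apply intervalIntegral.integral_congr_ae
    filter_upwards [ae_ne_half] with x hne hx
    rw [Set.uIoc_of_le (by norm_num : (0:ℝ) ≤ 1/2)] at hx
    rw [hlt x (lt_of_le_of_ne hx.2 hne), one_mul]
  rw [← hsplit, h2, add_zero, h1]

lemma ptwise_left {a b : ℝ} (ha : 0 < a) (hb : 0 < b) {x : ℝ}
    (hx : x ∈ Set.Icc (0:ℝ) (1/2)) :
    x ^ a * (1 - x) ^ (b - 1) ≤ x ^ (a - 1) * (1 - x) ^ b := by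
  obtain ⟨h0, h2⟩ := hx
  rcases eq_or_lt_of_le h0 with rfl | hpos
  · rw [Real.zero_rpow ha.ne', zero_mul]
    positivity
  · have h1x : (0:ℝ) < 1 - x := by linarith
    have e1 : x ^ a = x ^ (a - 1) * x := by
      rw [← Real.rpow_add_one hpos.ne' (a - 1), sub_add_cancel]
    have e2 : (1 - x) ^ b = (1 - x) ^ (b - 1) * (1 - x) := by
      rw [← Real.rpow_add_one h1x.ne' (b - 1), sub_add_cancel]
    calc x ^ a * (1 - x) ^ (b - 1)
        = (x ^ (a - 1) * (1 - x) ^ (b - 1)) * x := by rw [e1]; ring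
      _ ≤ (x ^ (a - 1) * (1 - x) ^ (b - 1)) * (1 - x) := by
          apply mul_le_mul_of_nonneg_left (by linarith) (by positivity)
      _ = x ^ (a - 1) * (1 - x) ^ b := by rw [e2]; ring

lemma ptwise_right {a b : ℝ} (ha : 0 < a) (hb : 0 < b) {x : ℝ}
    (hx : x ∈ Set.Icc (1/2:ℝ) 1) :
    x ^ (a - 1) * (1 - x) ^ b ≤ x ^ a * (1 - x) ^ (b - 1) := by
  obtain ⟨h0, h2⟩ := hx
  rcases eq_or_lt_of_le h2 with rfl | hlt
  · rw [sub_self, Real.zero_rpow hb.ne', mul_zero]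
    positivity
  · have hpos : (0:ℝ) < x := by linarith
    have h1x : (0:ℝ) < 1 - x := by linarith
    have e1 : x ^ a = x ^ (a - 1) * x := by
      rw [← Real.rpow_add_one hpos.ne' (a - 1), sub_add_cancel]
    have e2 : (1 - x) ^ b = (1 - x) ^ (b - 1) * (1 - x) := by
      rw [← Real.rpow_add_one h1x.ne' (b - 1), sub_add_cancel]
    calc x ^ (a - 1) * (1 - x) ^ b
        = (x ^ (a - 1) * (1 - x) ^ (b - 1)) * (1 - x) := by rw [e2]; ring
      _ ≤ (x ^ (a - 1) * (1 - x) ^ (b - 1)) * x := by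
          apply mul_le_mul_of_nonneg_left (by linarith) (by positivity)
      _ = x ^ a * (1 - x) ^ (b - 1) := by rw [e1]; ring

/-- case (1.iii) of the proof of Lemma 2: the attacker playing
opposite to its sample (`q0 = 1`, `q1 = 0`) with the defender defending `a`
exactly when `p < 1/2` (`σ_D(1/2)` arbitrary in `[0,1]`) is never a
pure-strategy equilibrium. -/
theorem case_one_three_never_equilibrium (R c γ α0 β0 : ℝ)
    (hR : 0 < R) (hc : 0 < c) (hα : 0 < α0) (hβ : 0 < β0)
    (σD : ℝ → ℝ)
    (hσD_lt : ∀ p : ℝ, p < 1/2 → σD p = 1)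
    (hσD_gt : ∀ p : ℝ, 1/2 < p → σD p = 0)
    (hσD_half : σD (1/2) ∈ Set.Icc (0:ℝ) 1) :
    ¬ IsPureEq R c γ α0 β0 1 0 σD := by
  rintro ⟨-, -, -, h0, h1, -⟩
  have hu0 : (-1:ℝ) < α0 - 1 := by linarith
  have hv0 : (-1:ℝ) < β0 := by linarith
  have hu1 : (-1:ℝ) < α0 := by linarith
  have hv1 : (-1:ℝ) < β0 - 1 := by linarith
  have I0 : IntervalIntegrable (fun p : ℝ => p ^ (α0 - 1) * (1 - p) ^ β0) volume 0 1 :=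
    aux_integrable hu0 hv0
  have I1 : IntervalIntegrable (fun p : ℝ => p ^ α0 * (1 - p) ^ (β0 - 1)) volume 0 1 :=
    aux_integrable hu1 hv1
  have hsub1 : Set.uIcc (0:ℝ) (1/2) ⊆ Set.uIcc (0:ℝ) 1 := by
    rw [Set.uIcc_of_le (by norm_num : (0:ℝ) ≤ 1/2), Set.uIcc_of_le (by norm_num : (0:ℝ) ≤ 1)]
    exact Set.Icc_subset_Icc le_rfl (by norm_num)
  have hsub2 : Set.uIcc (1/2:ℝ) 1 ⊆ Set.uIcc (0:ℝ) 1 := by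
    rw [Set.uIcc_of_le (by norm_num : (1/2:ℝ) ≤ 1), Set.uIcc_of_le (by norm_num : (0:ℝ) ≤ 1)]
    exact Set.Icc_subset_Icc (by norm_num) le_rfl
  have I0l := I0.mono_set hsub1
  have I0r := I0.mono_set hsub2
  have I1l := I1.mono_set hsub1
  have I1r := I1.mono_set hsub2
  set A0 := ∫ p in (0:ℝ)..(1/2), p ^ (α0 - 1) * (1 - p) ^ β0 with hA0def
  set C0 := ∫ p in (1/2:ℝ)..1, p ^ (α0 - 1) * (1 - p) ^ β0 with hC0def
  set A1 := ∫ p in (0:ℝ)..(1/2), p ^ α0 * (1 - p) ^ (β0 - 1) with hA1def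
  set C1 := ∫ p in (1/2:ℝ)..1, p ^ α0 * (1 - p) ^ (β0 - 1) with hC1def
  have hB0 : betaFn α0 (β0 + 1) = A0 + C0 := by
    have := integral_add_adjacent_intervals I0l I0r
    unfold betaFn
    simp only [add_sub_cancel_right]
    exact this.symm
  have hB1 : betaFn (α0 + 1) β0 = A1 + C1 := by
    have := integral_add_adjacent_intervals I1l I1r
    unfold betaFn
    simp only [add_sub_cancel_right]
    exact this.symm
  have e0 : expDef α0 β0 0 σD = A0 / (A0 + C0) := by
    unfold expDef
    simp only [add_zero, sub_zero]
    rw [half_integral hu0 hv0 σD hσD_lt hσD_gt I0, hB0]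
  have e1 : expDef α0 β0 1 σD = A1 / (A1 + C1) := by
    unfold expDef
    simp only [add_sub_cancel_right]
    rw [half_integral hu1 hv1 σD hσD_lt hσD_gt I1, hB1]
  have hB0pos : (0:ℝ) < A0 + C0 := by
    rw [← hB0]; exact betaFn_pos hα (by linarith)
  have hB1pos : (0:ℝ) < A1 + C1 := by
    rw [← hB1]; exact betaFn_pos (by linarith) hβ
  have hAle : A1 ≤ A0 := by
    apply integral_mono_on (by norm_num) I1l I0l
    intro x hx
    exact ptwise_left hα hβ hx
  have hCle : C0 ≤ C1 := by
    apply integral_mono_on (by norm_num) I0r I1r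
    intro x hx
    exact ptwise_right hα hβ hx
  have hA0nn : (0:ℝ) ≤ A0 := by
    apply intervalIntegral.integral_nonneg (by norm_num)
    intro x hx
    exact mul_nonneg (Real.rpow_nonneg hx.1 _)
      (Real.rpow_nonneg (by linarith [hx.2] : (0:ℝ) ≤ 1 - x) _)
  have hC0nn : (0:ℝ) ≤ C0 := by
    apply intervalIntegral.integral_nonneg (by norm_num)
    intro x hx
    exact mul_nonneg (Real.rpow_nonneg (by linarith [hx.1] : (0:ℝ) ≤ x) _)
      (Real.rpow_nonneg (by linarith [hx.2] : (0:ℝ) ≤ 1 - x) _)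
  have hE : expDef α0 β0 1 σD ≤ expDef α0 β0 0 σD := by
    rw [e0, e1, div_le_div_iff₀ hB1pos hB0pos]
    nlinarith [mul_le_mul_of_nonneg_right hAle hC0nn, mul_le_mul_of_nonneg_left hCle hA0nn]
  have hq0 := h0 0 ⟨le_rfl, zero_le_one⟩
  have hq1 := h1 1 ⟨zero_le_one, le_rfl⟩
  simp only [attackerObj, zero_mul, one_mul] at hq0 hq1
  have hm : postMean α0 β0 1 = postMean α0 β0 0 + 1 / (α0 + β0 + 1) := by
    unfold postMean
    rw [← add_div]
    norm_num
  have hkey : (0:ℝ) < 1 / (α0 + β0 + 1) * R := by positivity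
  have hexp : (postMean α0 β0 1 - γ) * R
      = (postMean α0 β0 0 - γ) * R + 1 / (α0 + β0 + 1) * R := by
    rw [hm]; ring
  have hce := mul_le_mul_of_nonneg_left hE hc.le
  linarith [hq0, hq1, hkey, hce, hexp]
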